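/- Let (u_n) be a sequence in ℝ³ such that every u_n is nondegenerate, u_{i,n} → +∞, and the sequences (u_{j,n}) and (u_{k,n}) converge. If θ_ki^j(u_n) → 0, then h_jk^i(u_n) → +∞, h_ki^j(u_n) → +∞, and h_ij^k(u_n) → −∞. -/

import Mathlib

open Real Filter Topology

/-- Edge length of a decorated edge with inversive distance `I`, base radii `ra, rb`
and conformal factors `x, y`. -/
noncomputable def elen (I ra rb x y : ℝ) : ℝ :=
  Real.sqrt ((Real.exp x * ra) ^ 2 + (Real.exp y * rb) ^ 2 +
    2 * I * (Real.exp x * ra) * (Real.exp y * rb))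

/-- Inner angle of a Euclidean triangle opposite the side `lc`, adjacent to `la, lb`. -/
noncomputable def ang (la lb lc : ℝ) : ℝ :=
  Real.arccos ((la ^ 2 + lb ^ 2 - lc ^ 2) / (2 * la * lb))

/-- Signed distance of the edge center to the vertex with scaled radius `ra`. -/
noncomputable def dCen (I ra rb l : ℝ) : ℝ := (ra ^ 2 + I * ra * rb) / l

/-- Signed height `(d_ac - d_ab * cos th) / sin th`. -/
noncomputable def hgt (dac dab th : ℝ) : ℝ := (dac - dab * Real.cos th) / Real.sin th

/-- Strict triangle inequalities for three side lengths. -/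
def Nondeg (a b c : ℝ) : Prop := a < b + c ∧ b < c + a ∧ c < a + b

noncomputable def Lij (ri rj rk Iij Ijk Iki ui uj uk : ℝ) : ℝ := elen Iij ri rj ui uj
noncomputable def Ljk (ri rj rk Iij Ijk Iki ui uj uk : ℝ) : ℝ := elen Ijk rj rk uj uk
noncomputable def Lki (ri rj rk Iij Ijk Iki ui uj uk : ℝ) : ℝ := elen Iki rk ri uk ui

/-- Inner angle `θ_jk^i` at vertex `i`. -/
noncomputable def ThI (ri rj rk Iij Ijk Iki ui uj uk : ℝ) : ℝ :=
  ang (Lij ri rj rk Iij Ijk Iki ui uj uk) (Lki ri rj rk Iij Ijk Iki ui uj uk)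
    (Ljk ri rj rk Iij Ijk Iki ui uj uk)

/-- Inner angle `θ_ki^j` at vertex `j`. -/
noncomputable def ThJ (ri rj rk Iij Ijk Iki ui uj uk : ℝ) : ℝ :=
  ang (Lij ri rj rk Iij Ijk Iki ui uj uk) (Ljk ri rj rk Iij Ijk Iki ui uj uk)
    (Lki ri rj rk Iij Ijk Iki ui uj uk)

/-- Inner angle `θ_ij^k` at vertex `k`. -/
noncomputable def ThK (ri rj rk Iij Ijk Iki ui uj uk : ℝ) : ℝ :=
  ang (Ljk ri rj rk Iij Ijk Iki ui uj uk) (Lki ri rj rk Iij Ijk Iki ui uj uk)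
    (Lij ri rj rk Iij Ijk Iki ui uj uk)

noncomputable def Dij (ri rj rk Iij Ijk Iki ui uj uk : ℝ) : ℝ :=
  dCen Iij (Real.exp ui * ri) (Real.exp uj * rj) (Lij ri rj rk Iij Ijk Iki ui uj uk)
noncomputable def Dji (ri rj rk Iij Ijk Iki ui uj uk : ℝ) : ℝ :=
  dCen Iij (Real.exp uj * rj) (Real.exp ui * ri) (Lij ri rj rk Iij Ijk Iki ui uj uk)
noncomputable def Djk (ri rj rk Iij Ijk Iki ui uj uk : ℝ) : ℝ :=
  dCen Ijk (Real.exp uj * rj) (Real.exp uk * rk) (Ljk ri rj rk Iij Ijk Iki ui uj uk)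
noncomputable def Dkj (ri rj rk Iij Ijk Iki ui uj uk : ℝ) : ℝ :=
  dCen Ijk (Real.exp uk * rk) (Real.exp uj * rj) (Ljk ri rj rk Iij Ijk Iki ui uj uk)
noncomputable def Dki (ri rj rk Iij Ijk Iki ui uj uk : ℝ) : ℝ :=
  dCen Iki (Real.exp uk * rk) (Real.exp ui * ri) (Lki ri rj rk Iij Ijk Iki ui uj uk)
noncomputable def Dik (ri rj rk Iij Ijk Iki ui uj uk : ℝ) : ℝ :=
  dCen Iki (Real.exp ui * ri) (Real.exp uk * rk) (Lki ri rj rk Iij Ijk Iki ui uj uk)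

/-- The height `h_ij^k`. -/
noncomputable def Hijk (ri rj rk Iij Ijk Iki ui uj uk : ℝ) : ℝ :=
  hgt (Dik ri rj rk Iij Ijk Iki ui uj uk) (Dij ri rj rk Iij Ijk Iki ui uj uk)
    (ThI ri rj rk Iij Ijk Iki ui uj uk)

/-- The height `h_ik^j`. -/
noncomputable def Hikj (ri rj rk Iij Ijk Iki ui uj uk : ℝ) : ℝ :=
  hgt (Dij ri rj rk Iij Ijk Iki ui uj uk) (Dik ri rj rk Iij Ijk Iki ui uj uk)
    (ThI ri rj rk Iij Ijk Iki ui uj uk)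

/-- The height `h_jk^i`. -/
noncomputable def Hjki (ri rj rk Iij Ijk Iki ui uj uk : ℝ) : ℝ :=
  hgt (Dji ri rj rk Iij Ijk Iki ui uj uk) (Djk ri rj rk Iij Ijk Iki ui uj uk)
    (ThJ ri rj rk Iij Ijk Iki ui uj uk)

/-- The height `h_ki^j`. -/
noncomputable def Hkij (ri rj rk Iij Ijk Iki ui uj uk : ℝ) : ℝ :=
  hgt (Dkj ri rj rk Iij Ijk Iki ui uj uk) (Dki ri rj rk Iij Ijk Iki ui uj uk)
    (ThK ri rj rk Iij Ijk Iki ui uj uk)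

/-- The area `A_ijk = (1/2) l_ij l_jk sin θ_ki^j`. -/
noncomputable def Area (ri rj rk Iij Ijk Iki ui uj uk : ℝ) : ℝ :=
  (1 / 2) * Lij ri rj rk Iij Ijk Iki ui uj uk * Ljk ri rj rk Iij Ijk Iki ui uj uk *
    Real.sin (ThJ ri rj rk Iij Ijk Iki ui uj uk)

/-- Nondegeneracy of the decorated triangle at `u`. -/
def NondegT (ri rj rk Iij Ijk Iki ui uj uk : ℝ) : Prop :=
  Nondeg (Lij ri rj rk Iij Ijk Iki ui uj uk) (Ljk ri rj rk Iij Ijk Iki ui uj uk)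
    (Lki ri rj rk Iij Ijk Iki ui uj uk)

noncomputable def cQ (p q r : ℝ) : ℝ := (p ^ 2 + q ^ 2 - r ^ 2) / (2 * p * q)
noncomputable def QQ (p q r : ℝ) : ℝ := 4 * p ^ 2 * q ^ 2 - (p ^ 2 + q ^ 2 - r ^ 2) ^ 2

lemma QQ_symm (p q r : ℝ) : QQ p q r = QQ p r q := by simp only [QQ]; ring

lemma cQ_bounds {p q r : ℝ} (hp : 0 < p) (hq : 0 < q)
    (h1 : p < q + r) (h2 : q < r + p) (h3 : r < p + q) :
    -1 < cQ p q r ∧ cQ p q r < 1 := by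
  have hr : 0 < r := by linarith
  constructor
  · rw [cQ, lt_div_iff₀ (by positivity)]; nlinarith
  · rw [cQ, div_lt_one (by positivity)]; nlinarith

lemma QQ_pos {p q r : ℝ} (hp : 0 < p) (hq : 0 < q)
    (h1 : p < q + r) (h2 : q < r + p) (h3 : r < p + q) : 0 < QQ p q r := by
  have hr : 0 < r := by linarith
  have e : QQ p q r = (p + q + r) * (q + r - p) * (r + p - q) * (p + q - r) := by
    simp only [QQ]; ring
  rw [e]
  exact mul_pos (mul_pos (mul_pos (by linarith : (0:ℝ) < p + q + r)
    (by linarith : (0:ℝ) < q + r - p)) (by linarith : (0:ℝ) < r + p - q))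
    (by linarith : (0:ℝ) < p + q - r)

lemma cos_ang {p q r : ℝ} (hb : -1 < cQ p q r ∧ cQ p q r < 1) :
    Real.cos (ang p q r) = cQ p q r := by
  rw [ang]; exact Real.cos_arccos hb.1.le hb.2.le

lemma sin_ang (p q r : ℝ) : Real.sin (ang p q r) = Real.sqrt (1 - cQ p q r ^ 2) := by
  rw [ang, Real.sin_arccos]; rfl

lemma sqrt_one_sub_cQ_sq {p q r : ℝ} (hp : 0 < p) (hq : 0 < q) (hQ : 0 ≤ QQ p q r) :
    Real.sqrt (1 - cQ p q r ^ 2) = Real.sqrt (QQ p q r) / (2 * p * q) := by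
  rw [show 1 - cQ p q r ^ 2 = QQ p q r / (2 * p * q) ^ 2 from by
      rw [cQ, QQ]; field_simp; ring,
    Real.sqrt_div hQ, Real.sqrt_sq (by positivity)]

lemma ident1 (x y z Iij Iki lA lB lC s : ℝ) (hA : lA ≠ 0) (hC : lC ≠ 0) (hs : s ≠ 0) :
    ((x^2+Iki*x*z)/lC - (x^2+Iij*x*y)/lA * ((lA^2+lC^2-lB^2)/(2*lA*lC))) / (s/(2*lA*lC))
    = (2*lA^2*(x^2+Iki*x*z) - (x^2+Iij*x*y)*(lA^2+lC^2-lB^2))/(lA*s) := by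
  field_simp

lemma ident2 (x lA lB s Bi : ℝ) (hx : x ≠ 0) (hA : lA ≠ 0) (hB : lB ≠ 0) (hs : s ≠ 0) :
    Bi/(lA*s) = (Bi/x^2)/(2*(lA/x)^2*lB*(s/(2*lA*lB))) := by
  field_simp

lemma tendsto_div_pos_atTop {f g : ℕ → ℝ} {C : ℝ} (hC : 0 < C)
    (hf : Tendsto f atTop (𝓝 C)) (hg : Tendsto g atTop (𝓝 0)) (hgpos : ∀ n, 0 < g n) :
    Tendsto (fun n => f n / g n) atTop atTop := by
  have h1 : Tendsto g atTop (𝓝[>] (0:ℝ)) :=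
    tendsto_nhdsWithin_of_tendsto_nhds_of_eventually_within _ hg (Eventually.of_forall hgpos)
  have h2 : Tendsto (fun n => (g n)⁻¹) atTop atTop := tendsto_inv_nhdsGT_zero.comp h1
  simpa [div_eq_mul_inv] using hf.pos_mul_atTop hC h2

lemma tendsto_div_neg_atBot {f g : ℕ → ℝ} {C : ℝ} (hC : C < 0)
    (hf : Tendsto f atTop (𝓝 C)) (hg : Tendsto g atTop (𝓝 0)) (hgpos : ∀ n, 0 < g n) :
    Tendsto (fun n => f n / g n) atTop atBot := by
  have h1 : Tendsto g atTop (𝓝[>] (0:ℝ)) :=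
    tendsto_nhdsWithin_of_tendsto_nhds_of_eventually_within _ hg (Eventually.of_forall hgpos)
  have h2 : Tendsto (fun n => (g n)⁻¹) atTop atTop := tendsto_inv_nhdsGT_zero.comp h1
  simpa [div_eq_mul_inv] using hf.neg_mul_atTop hC h2

set_option maxHeartbeats 1600000 in
theorem heights_aux (Iij Ijk Iki Rj Rk : ℝ) (hIij : 1 < Iij) (hIjk : 1 < Ijk) (hIki : 1 < Iki)
    (hRj : 0 < Rj) (hRk : 0 < Rk)
    (x y z lA lB lC : ℕ → ℝ)
    (hx : ∀ n, 0 < x n) (hy : ∀ n, 0 < y n) (hz : ∀ n, 0 < z n)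
    (elA : ∀ n, lA n = Real.sqrt (x n ^ 2 + y n ^ 2 + 2 * Iij * x n * y n))
    (elB : ∀ n, lB n = Real.sqrt (y n ^ 2 + z n ^ 2 + 2 * Ijk * y n * z n))
    (elC : ∀ n, lC n = Real.sqrt (z n ^ 2 + x n ^ 2 + 2 * Iki * z n * x n))
    (hnd : ∀ n, Nondeg (lA n) (lB n) (lC n))
    (hxtop : Tendsto x atTop atTop)
    (hylim : Tendsto y atTop (𝓝 Rj)) (hzlim : Tendsto z atTop (𝓝 Rk))
    (hθ : Tendsto (fun n => ang (lA n) (lB n) (lC n)) atTop (𝓝 0)) :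
    Tendsto (fun n => hgt (dCen Iij (y n) (x n) (lA n)) (dCen Ijk (y n) (z n) (lB n))
      (ang (lA n) (lB n) (lC n))) atTop atTop ∧
    Tendsto (fun n => hgt (dCen Ijk (z n) (y n) (lB n)) (dCen Iki (z n) (x n) (lC n))
      (ang (lB n) (lC n) (lA n))) atTop atTop ∧
    Tendsto (fun n => hgt (dCen Iki (x n) (z n) (lC n)) (dCen Iij (x n) (y n) (lA n))
      (ang (lA n) (lC n) (lB n))) atTop atBot := by
  have hIij0 : (0:ℝ) < Iij := by linarith
  have hIjk0 : (0:ℝ) < Ijk := by linarith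
  have hIki0 : (0:ℝ) < Iki := by linarith
  have hargA : ∀ n, 0 < x n ^ 2 + y n ^ 2 + 2 * Iij * x n * y n := fun n => by
    nlinarith [mul_pos (mul_pos hIij0 (hx n)) (hy n), pow_pos (hx n) 2, pow_pos (hy n) 2]
  have hargB : ∀ n, 0 < y n ^ 2 + z n ^ 2 + 2 * Ijk * y n * z n := fun n => by
    nlinarith [mul_pos (mul_pos hIjk0 (hy n)) (hz n), pow_pos (hy n) 2, pow_pos (hz n) 2]
  have hargC : ∀ n, 0 < z n ^ 2 + x n ^ 2 + 2 * Iki * z n * x n := fun n => by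
    nlinarith [mul_pos (mul_pos hIki0 (hz n)) (hx n), pow_pos (hz n) 2, pow_pos (hx n) 2]
  have hlApos : ∀ n, 0 < lA n := fun n => by rw [elA n]; exact Real.sqrt_pos.mpr (hargA n)
  have hlBpos : ∀ n, 0 < lB n := fun n => by rw [elB n]; exact Real.sqrt_pos.mpr (hargB n)
  have hlCpos : ∀ n, 0 < lC n := fun n => by rw [elC n]; exact Real.sqrt_pos.mpr (hargC n)
  have hlA2 : ∀ n, lA n ^ 2 = x n ^ 2 + y n ^ 2 + 2 * Iij * x n * y n := fun n => by
    rw [elA n]; exact Real.sq_sqrt (hargA n).le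
  have hlB2 : ∀ n, lB n ^ 2 = y n ^ 2 + z n ^ 2 + 2 * Ijk * y n * z n := fun n => by
    rw [elB n]; exact Real.sq_sqrt (hargB n).le
  have hlC2 : ∀ n, lC n ^ 2 = z n ^ 2 + x n ^ 2 + 2 * Iki * z n * x n := fun n => by
    rw [elC n]; exact Real.sq_sqrt (hargC n).le
  have hxne : ∀ n, x n ≠ 0 := fun n => (hx n).ne'
  set L : ℝ := Real.sqrt (Rj ^ 2 + Rk ^ 2 + 2 * Ijk * Rj * Rk) with hLdef
  have hargL : 0 < Rj ^ 2 + Rk ^ 2 + 2 * Ijk * Rj * Rk := by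
    nlinarith [mul_pos (mul_pos hIjk0 hRj) hRk, pow_pos hRj 2, pow_pos hRk 2]
  have hLpos : 0 < L := Real.sqrt_pos.mpr hargL
  have hL2 : L ^ 2 = Rj ^ 2 + Rk ^ 2 + 2 * Ijk * Rj * Rk := Real.sq_sqrt hargL.le
  have hlBlim : Tendsto lB atTop (𝓝 L) := by
    have h1 : Tendsto (fun n => y n ^ 2 + z n ^ 2 + 2 * Ijk * y n * z n) atTop
        (𝓝 (Rj ^ 2 + Rk ^ 2 + 2 * Ijk * Rj * Rk)) :=
      ((hylim.pow 2).add (hzlim.pow 2)).add ((tendsto_const_nhds.mul hylim).mul hzlim)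
    exact Tendsto.congr (fun n => (elB n).symm) h1.sqrt
  have hyx : Tendsto (fun n => y n / x n) atTop (𝓝 0) := hylim.div_atTop hxtop
  have hzx : Tendsto (fun n => z n / x n) atTop (𝓝 0) := hzlim.div_atTop hxtop
  have hAx : Tendsto (fun n => lA n / x n) atTop (𝓝 1) := by
    have he : ∀ n, lA n / x n = Real.sqrt (1 + (y n / x n) ^ 2 + 2 * Iij * (y n / x n)) := by
      intro n
      rw [elA n, show 1 + (y n / x n) ^ 2 + 2 * Iij * (y n / x n)
          = (x n ^ 2 + y n ^ 2 + 2 * Iij * x n * y n) / (x n) ^ 2 from by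
        field_simp [hxne n], Real.sqrt_div (hargA n).le, Real.sqrt_sq (hx n).le]
    have h1 : Tendsto (fun n => 1 + (y n / x n) ^ 2 + 2 * Iij * (y n / x n)) atTop
        (𝓝 (1 + (0:ℝ) ^ 2 + 2 * Iij * 0)) :=
      (tendsto_const_nhds.add (hyx.pow 2)).add (tendsto_const_nhds.mul hyx)
    have h2 := h1.sqrt
    rw [show (1 + (0:ℝ) ^ 2 + 2 * Iij * 0) = 1 by norm_num, Real.sqrt_one] at h2
    exact Tendsto.congr (fun n => (he n).symm) h2
  have hCx : Tendsto (fun n => lC n / x n) atTop (𝓝 1) := by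
    have he : ∀ n, lC n / x n = Real.sqrt ((z n / x n) ^ 2 + 1 + 2 * Iki * (z n / x n)) := by
      intro n
      rw [elC n, show (z n / x n) ^ 2 + 1 + 2 * Iki * (z n / x n)
          = (z n ^ 2 + x n ^ 2 + 2 * Iki * z n * x n) / (x n) ^ 2 from by
        field_simp [hxne n], Real.sqrt_div (hargC n).le, Real.sqrt_sq (hx n).le]
    have h1 : Tendsto (fun n => (z n / x n) ^ 2 + 1 + 2 * Iki * (z n / x n)) atTop
        (𝓝 ((0:ℝ) ^ 2 + 1 + 2 * Iki * 0)) :=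
      ((hzx.pow 2).add tendsto_const_nhds).add (tendsto_const_nhds.mul hzx)
    have h2 := h1.sqrt
    rw [show ((0:ℝ) ^ 2 + 1 + 2 * Iki * 0) = 1 by norm_num, Real.sqrt_one] at h2
    exact Tendsto.congr (fun n => (he n).symm) h2
  have hbJ : ∀ n, -1 < cQ (lA n) (lB n) (lC n) ∧ cQ (lA n) (lB n) (lC n) < 1 := fun n =>
    cQ_bounds (hlApos n) (hlBpos n) (hnd n).1 (hnd n).2.1 (hnd n).2.2
  have hbK : ∀ n, -1 < cQ (lB n) (lC n) (lA n) ∧ cQ (lB n) (lC n) (lA n) < 1 := fun n =>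
    cQ_bounds (hlBpos n) (hlCpos n) (hnd n).2.1 (hnd n).2.2 (hnd n).1
  have hbI : ∀ n, -1 < cQ (lA n) (lC n) (lB n) ∧ cQ (lA n) (lC n) (lB n) < 1 := fun n =>
    cQ_bounds (hlApos n) (hlCpos n) (by linarith [(hnd n).1]) (by linarith [(hnd n).2.2])
      (by linarith [(hnd n).2.1])
  -- limit of cQ at j
  have htJ1 : Tendsto (fun n => cQ (lA n) (lB n) (lC n)) atTop (𝓝 1) := by
    have h1 := (Real.continuous_cos.tendsto 0).comp hθ
    simp only [Function.comp_def, Real.cos_zero] at h1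
    exact Tendsto.congr (fun n => cos_ang (hbJ n)) h1
  have heqJ : ∀ n, cQ (lA n) (lB n) (lC n) =
      ((y n ^ 2 - z n ^ 2 + lB n ^ 2) / x n + 2 * (Iij * y n - Iki * z n))
        / (2 * (lA n / x n) * lB n) := by
    intro n
    rw [cQ, hlA2 n, hlC2 n]
    field_simp [hxne n, (hlApos n).ne', (hlBpos n).ne', (hlCpos n).ne']
    ring
  have htJ2 : Tendsto (fun n => cQ (lA n) (lB n) (lC n)) atTop
      (𝓝 ((0 + 2 * (Iij * Rj - Iki * Rk)) / (2 * 1 * L))) := by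
    apply Tendsto.congr (fun n => (heqJ n).symm)
    apply Tendsto.div
    · exact ((((hylim.pow 2).sub (hzlim.pow 2)).add (hlBlim.pow 2)).div_atTop hxtop).add
        (tendsto_const_nhds.mul ((tendsto_const_nhds.mul hylim).sub (tendsto_const_nhds.mul hzlim)))
    · exact (tendsto_const_nhds.mul hAx).mul hlBlim
    · exact (by nlinarith : (0:ℝ) < 2 * 1 * L).ne'
  have hKey : Iij * Rj - Iki * Rk = L := by
    have h := tendsto_nhds_unique htJ2 htJ1
    field_simp at h
    linarith
  -- limit of cQ at k
  have heqK : ∀ n, cQ (lB n) (lC n) (lA n) =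
      ((lB n ^ 2 + (z n ^ 2 - y n ^ 2)) / x n + 2 * (Iki * z n - Iij * y n))
        / (2 * lB n * (lC n / x n)) := by
    intro n
    rw [cQ, hlA2 n, hlC2 n]
    field_simp [hxne n, (hlApos n).ne', (hlBpos n).ne', (hlCpos n).ne']
    ring
  have htK : Tendsto (fun n => cQ (lB n) (lC n) (lA n)) atTop (𝓝 (-1)) := by
    have h1 : Tendsto (fun n => ((lB n ^ 2 + (z n ^ 2 - y n ^ 2)) / x n
        + 2 * (Iki * z n - Iij * y n)) / (2 * lB n * (lC n / x n))) atTop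
        (𝓝 ((0 + 2 * (Iki * Rk - Iij * Rj)) / (2 * L * 1))) := by
      apply Tendsto.div
      · exact (((hlBlim.pow 2).add ((hzlim.pow 2).sub (hylim.pow 2))).div_atTop hxtop).add
          (tendsto_const_nhds.mul ((tendsto_const_nhds.mul hzlim).sub (tendsto_const_nhds.mul hylim)))
      · exact (tendsto_const_nhds.mul hlBlim).mul hCx
      · exact (by nlinarith : (0:ℝ) < 2 * L * 1).ne'
    have h2 : (0 + 2 * (Iki * Rk - Iij * Rj)) / (2 * L * 1) = -1 := by
      rw [div_eq_iff (by nlinarith : (2:ℝ) * L * 1 ≠ 0)]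
      linarith
    rw [h2] at h1
    exact Tendsto.congr (fun n => (heqK n).symm) h1
  -- d limits
  have hdJI : Tendsto (fun n => (y n ^ 2 + Iij * y n * x n) / lA n) atTop (𝓝 (Iij * Rj)) := by
    have he : ∀ n, (y n ^ 2 + Iij * y n * x n) / lA n
        = (y n ^ 2 / x n + Iij * y n) / (lA n / x n) := by
      intro n
      field_simp [hxne n, (hlApos n).ne']
    have h1 : Tendsto (fun n => (y n ^ 2 / x n + Iij * y n) / (lA n / x n)) atTop
        (𝓝 ((0 + Iij * Rj) / 1)) :=
      Tendsto.div (((hylim.pow 2).div_atTop hxtop).add (tendsto_const_nhds.mul hylim)) hAx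
        one_ne_zero
    rw [show ((0:ℝ) + Iij * Rj) / 1 = Iij * Rj by norm_num] at h1
    exact Tendsto.congr (fun n => (he n).symm) h1
  have hdKI : Tendsto (fun n => (z n ^ 2 + Iki * z n * x n) / lC n) atTop (𝓝 (Iki * Rk)) := by
    have he : ∀ n, (z n ^ 2 + Iki * z n * x n) / lC n
        = (z n ^ 2 / x n + Iki * z n) / (lC n / x n) := by
      intro n
      field_simp [hxne n, (hlCpos n).ne']
    have h1 : Tendsto (fun n => (z n ^ 2 / x n + Iki * z n) / (lC n / x n)) atTop
        (𝓝 ((0 + Iki * Rk) / 1)) :=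
      Tendsto.div (((hzlim.pow 2).div_atTop hxtop).add (tendsto_const_nhds.mul hzlim)) hCx
        one_ne_zero
    rw [show ((0:ℝ) + Iki * Rk) / 1 = Iki * Rk by norm_num] at h1
    exact Tendsto.congr (fun n => (he n).symm) h1
  have hdJK : Tendsto (fun n => (y n ^ 2 + Ijk * y n * z n) / lB n) atTop
      (𝓝 ((Rj ^ 2 + Ijk * Rj * Rk) / L)) :=
    Tendsto.div ((hylim.pow 2).add ((tendsto_const_nhds.mul hylim).mul hzlim)) hlBlim hLpos.ne'
  have hdKJ : Tendsto (fun n => (z n ^ 2 + Ijk * z n * y n) / lB n) atTop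
      (𝓝 ((Rk ^ 2 + Ijk * Rk * Rj) / L)) :=
    Tendsto.div ((hzlim.pow 2).add ((tendsto_const_nhds.mul hzlim).mul hylim)) hlBlim hLpos.ne'
  -- sines
  have hsJpos : ∀ n, 0 < Real.sqrt (1 - cQ (lA n) (lB n) (lC n) ^ 2) := fun n =>
    Real.sqrt_pos.mpr (by nlinarith [(hbJ n).1, (hbJ n).2])
  have hsJ0 : Tendsto (fun n => Real.sqrt (1 - cQ (lA n) (lB n) (lC n) ^ 2)) atTop (𝓝 0) := by
    have h1 : Tendsto (fun n => Real.sqrt (1 - cQ (lA n) (lB n) (lC n) ^ 2)) atTop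
        (𝓝 (Real.sqrt (1 - 1 ^ 2))) := (tendsto_const_nhds.sub (htJ1.pow 2)).sqrt
    rw [show (1 - (1:ℝ) ^ 2) = 0 by norm_num, Real.sqrt_zero] at h1
    exact h1
  have hsKpos : ∀ n, 0 < Real.sqrt (1 - cQ (lB n) (lC n) (lA n) ^ 2) := fun n =>
    Real.sqrt_pos.mpr (by nlinarith [(hbK n).1, (hbK n).2])
  have hsK0 : Tendsto (fun n => Real.sqrt (1 - cQ (lB n) (lC n) (lA n) ^ 2)) atTop (𝓝 0) := by
    have h1 : Tendsto (fun n => Real.sqrt (1 - cQ (lB n) (lC n) (lA n) ^ 2)) atTop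
        (𝓝 (Real.sqrt (1 - (-1) ^ 2))) := (tendsto_const_nhds.sub (htK.pow 2)).sqrt
    rw [show (1 - (-1:ℝ) ^ 2) = 0 by norm_num, Real.sqrt_zero] at h1
    exact h1
  refine ⟨?_, ?_, ?_⟩
  · -- h_jk^i → +∞
    have he : ∀ n, hgt (dCen Iij (y n) (x n) (lA n)) (dCen Ijk (y n) (z n) (lB n))
        (ang (lA n) (lB n) (lC n)) =
        ((y n ^ 2 + Iij * y n * x n) / lA n - (y n ^ 2 + Ijk * y n * z n) / lB n
          * cQ (lA n) (lB n) (lC n)) / Real.sqrt (1 - cQ (lA n) (lB n) (lC n) ^ 2) := by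
      intro n
      simp only [hgt, dCen]
      rw [cos_ang (hbJ n), sin_ang]
    apply Tendsto.congr (fun n => (he n).symm)
    have hC1 : 0 < Iij * Rj - (Rj ^ 2 + Ijk * Rj * Rk) / L * 1 := by
      rw [mul_one, sub_pos, div_lt_iff₀ hLpos]
      have hKL : Iij * Rj * L = L ^ 2 + Iki * Rk * L := by linear_combination L * hKey
      nlinarith [hL2, pow_pos hRk 2, mul_pos (mul_pos hIjk0 hRj) hRk,
        mul_pos (mul_pos hIki0 hRk) hLpos]
    exact tendsto_div_pos_atTop hC1 (hdJI.sub (hdJK.mul htJ1)) hsJ0 hsJpos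
  · -- h_ki^j → +∞
    have he : ∀ n, hgt (dCen Ijk (z n) (y n) (lB n)) (dCen Iki (z n) (x n) (lC n))
        (ang (lB n) (lC n) (lA n)) =
        ((z n ^ 2 + Ijk * z n * y n) / lB n - (z n ^ 2 + Iki * z n * x n) / lC n
          * cQ (lB n) (lC n) (lA n)) / Real.sqrt (1 - cQ (lB n) (lC n) (lA n) ^ 2) := by
      intro n
      simp only [hgt, dCen]
      rw [cos_ang (hbK n), sin_ang]
    apply Tendsto.congr (fun n => (he n).symm)
    have hC2 : 0 < (Rk ^ 2 + Ijk * Rk * Rj) / L - Iki * Rk * (-1) := by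
      have h1 : 0 < (Rk ^ 2 + Ijk * Rk * Rj) / L :=
        div_pos (by nlinarith [pow_pos hRk 2, mul_pos (mul_pos hIjk0 hRk) hRj]) hLpos
      nlinarith [mul_pos hIki0 hRk]
    exact tendsto_div_pos_atTop hC2 (hdKJ.sub (hdKI.mul htK)) hsK0 hsKpos
  · -- h_ij^k → -∞
    have hQQpos : ∀ n, 0 < QQ (lA n) (lB n) (lC n) := fun n =>
      QQ_pos (hlApos n) (hlBpos n) (hnd n).1 (hnd n).2.1 (hnd n).2.2
    have he : ∀ n, hgt (dCen Iki (x n) (z n) (lC n)) (dCen Iij (x n) (y n) (lA n))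
        (ang (lA n) (lC n) (lB n)) =
        ((2 * (x n ^ 2 * y n ^ 2 * (1 - Iij ^ 2) + z n * x n * y n *
            ((Iki + Iij * Ijk) * y n + (Ijk + Iki * Iij) * x n))) / x n ^ 2)
          / (2 * (lA n / x n) ^ 2 * lB n * Real.sqrt (1 - cQ (lA n) (lB n) (lC n) ^ 2)) := by
      intro n
      have hsI : Real.sin (ang (lA n) (lC n) (lB n))
          = Real.sqrt (QQ (lA n) (lB n) (lC n)) / (2 * lA n * lC n) := by
        rw [sin_ang, sqrt_one_sub_cQ_sq (hlApos n) (hlCpos n)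
          (by rw [QQ_symm]; exact (hQQpos n).le), QQ_symm]
      have hsJQ : Real.sqrt (1 - cQ (lA n) (lB n) (lC n) ^ 2)
          = Real.sqrt (QQ (lA n) (lB n) (lC n)) / (2 * lA n * lB n) :=
        sqrt_one_sub_cQ_sq (hlApos n) (hlBpos n) (hQQpos n).le
      have hsq : 0 < Real.sqrt (QQ (lA n) (lB n) (lC n)) := Real.sqrt_pos.mpr (hQQpos n)
      have key : 2 * lA n ^ 2 * (x n ^ 2 + Iki * x n * z n)
          - (x n ^ 2 + Iij * x n * y n) * (lA n ^ 2 + lC n ^ 2 - lB n ^ 2)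
          = 2 * (x n ^ 2 * y n ^ 2 * (1 - Iij ^ 2) + z n * x n * y n *
            ((Iki + Iij * Ijk) * y n + (Ijk + Iki * Iij) * x n)) := by
        rw [hlA2 n, hlB2 n, hlC2 n]; ring
      simp only [hgt, dCen]
      rw [cos_ang (hbI n), hsI, hsJQ, cQ,
        ident1 (x n) (y n) (z n) Iij Iki (lA n) (lB n) (lC n) _
          (hlApos n).ne' (hlCpos n).ne' hsq.ne', key]
      exact ident2 (x n) (lA n) (lB n) _ _ (hxne n) (hlApos n).ne' (hlBpos n).ne' hsq.ne'
    apply Tendsto.congr (fun n => (he n).symm)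
    have hflim : Tendsto (fun n => (2 * (x n ^ 2 * y n ^ 2 * (1 - Iij ^ 2) + z n * x n * y n *
        ((Iki + Iij * Ijk) * y n + (Ijk + Iki * Iij) * x n))) / x n ^ 2) atTop
        (𝓝 (2 * ((Rj ^ 2 * (1 - Iij ^ 2) + 0) + Rk * Rj * (Ijk + Iki * Iij)))) := by
      have he2 : ∀ n, (2 * (x n ^ 2 * y n ^ 2 * (1 - Iij ^ 2) + z n * x n * y n *
          ((Iki + Iij * Ijk) * y n + (Ijk + Iki * Iij) * x n))) / x n ^ 2
          = 2 * ((y n ^ 2 * (1 - Iij ^ 2) + (z n * y n ^ 2 * (Iki + Iij * Ijk)) / x n)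
            + z n * y n * (Ijk + Iki * Iij)) := by
        intro n; field_simp [hxne n]; ring
      apply Tendsto.congr (fun n => (he2 n).symm)
      exact tendsto_const_nhds.mul ((((hylim.pow 2).mul_const (1 - Iij ^ 2)).add
        (((hzlim.mul (hylim.pow 2)).mul_const (Iki + Iij * Ijk)).div_atTop hxtop)).add
        ((hzlim.mul hylim).mul_const (Ijk + Iki * Iij)))
    have hCneg : 2 * ((Rj ^ 2 * (1 - Iij ^ 2) + 0) + Rk * Rj * (Ijk + Iki * Iij)) < 0 := by
      have E1 : Rj ^ 2 * (Iij ^ 2 - 1) = Rk ^ 2 * (1 - Iki ^ 2) + 2 * Rj * Rk * (Ijk + Iij * Iki) := by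
        linear_combination (Iij * Rj - Iki * Rk + L) * hKey + hL2
      have hM : 0 < Rk * (1 - Iki ^ 2) + Rj * (Ijk + Iij * Iki) := by
        have h2 : Iij * (Rk * (1 - Iki ^ 2) + Rj * (Ijk + Iij * Iki))
            = Rk * (Iij + Iki * Ijk) + L * (Ijk + Iij * Iki) := by
          linear_combination (Ijk + Iij * Iki) * hKey
        have hrhs : 0 < Rk * (Iij + Iki * Ijk) + L * (Ijk + Iij * Iki) :=
          add_pos (mul_pos hRk (by nlinarith)) (mul_pos hLpos (by nlinarith))
        nlinarith [h2, hrhs, hIij0]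
      nlinarith [E1, mul_pos hRk hM]
    have hgpos : ∀ n, 0 < 2 * (lA n / x n) ^ 2 * lB n
        * Real.sqrt (1 - cQ (lA n) (lB n) (lC n) ^ 2) := fun n =>
      mul_pos (mul_pos (mul_pos two_pos (pow_pos (div_pos (hlApos n) (hx n)) 2)) (hlBpos n))
        (hsJpos n)
    have hglim : Tendsto (fun n => 2 * (lA n / x n) ^ 2 * lB n
        * Real.sqrt (1 - cQ (lA n) (lB n) (lC n) ^ 2)) atTop (𝓝 0) := by
      have h1 : Tendsto (fun n => 2 * (lA n / x n) ^ 2 * lB n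
          * Real.sqrt (1 - cQ (lA n) (lB n) (lC n) ^ 2)) atTop (𝓝 (2 * 1 ^ 2 * L * 0)) :=
        ((tendsto_const_nhds.mul (hAx.pow 2)).mul hlBlim).mul hsJ0
      rw [show (2:ℝ) * 1 ^ 2 * L * 0 = 0 by ring] at h1
      exact h1
    exact tendsto_div_neg_atBot hCneg hflim hglim hgpos

/-- If `u_i → +∞`, `u_j, u_k` converge and `θ_ki^j → 0`, then
`h_jk^i → +∞`, `h_ki^j → +∞` and `h_ij^k → -∞`. -/
theorem heights_diverge (ri rj rk Iij Ijk Iki : ℝ) (hri : 0 < ri) (hrj : 0 < rj) (hrk : 0 < rk)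
    (hIij : 1 < Iij) (hIjk : 1 < Ijk) (hIki : 1 < Iki)
    (a b c : ℕ → ℝ) (aj ak : ℝ)
    (hnd : ∀ n, NondegT ri rj rk Iij Ijk Iki (a n) (b n) (c n))
    (ha : Tendsto a atTop atTop) (hb : Tendsto b atTop (𝓝 aj))
    (hc : Tendsto c atTop (𝓝 ak))
    (hθj : Tendsto (fun n => ThJ ri rj rk Iij Ijk Iki (a n) (b n) (c n)) atTop (𝓝 0)) :
    Tendsto (fun n => Hjki ri rj rk Iij Ijk Iki (a n) (b n) (c n)) atTop atTop ∧
    Tendsto (fun n => Hkij ri rj rk Iij Ijk Iki (a n) (b n) (c n)) atTop atTop ∧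
    Tendsto (fun n => Hijk ri rj rk Iij Ijk Iki (a n) (b n) (c n)) atTop atBot := by
  have hxtop : Tendsto (fun n => Real.exp (a n) * ri) atTop atTop :=
    (Real.tendsto_exp_atTop.comp ha).atTop_mul_const hri
  have hylim : Tendsto (fun n => Real.exp (b n) * rj) atTop (𝓝 (Real.exp aj * rj)) :=
    ((Real.continuous_exp.tendsto aj).comp hb).mul_const rj
  have hzlim : Tendsto (fun n => Real.exp (c n) * rk) atTop (𝓝 (Real.exp ak * rk)) :=
    ((Real.continuous_exp.tendsto ak).comp hc).mul_const rk
  exact heights_aux Iij Ijk Iki (Real.exp aj * rj) (Real.exp ak * rk) hIij hIjk hIki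
    (by positivity) (by positivity)
    (fun n => Real.exp (a n) * ri) (fun n => Real.exp (b n) * rj) (fun n => Real.exp (c n) * rk)
    (fun n => Lij ri rj rk Iij Ijk Iki (a n) (b n) (c n))
    (fun n => Ljk ri rj rk Iij Ijk Iki (a n) (b n) (c n))
    (fun n => Lki ri rj rk Iij Ijk Iki (a n) (b n) (c n))
    (fun n => by positivity) (fun n => by positivity) (fun n => by positivity)
    (fun n => rfl) (fun n => rfl) (fun n => rfl)
    hnd hxtop hylim hzlim hθj
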